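/- arXiv:2507.16513 — 2 statements merged into one kernel-verified Lean document; each statement's English description precedes it below -/
import Mathlib

section
/- Let d ≥ 1 and for i = 1,…,d let φ_i : ℝ → ℝ be a function with φ_i(0) = 0 satisfying the incremental sector bound μ_i·(x−y)² ≤ (x−y)·(φ_i(x)−φ_i(y)) ≤ λ_i·(x−y)² for all x, y ∈ ℝ, where μ_i ≤ λ_i are real constants. Set μ := min_i μ_i and λ := max_i λ_i, and define the diagonal static operator Φ : L₂^d → L₂^d by (Φu)(t) := (φ₁(u₁(t)),…,φ_d(u_d(t))) (which is well defined since each φ_i is Lipschitz with φ_i(0)=0). Then SRG(Φ) ⊆ { z ∈ ℂ : |z − (λ+μ)/2| ≤ (λ−μ)/2 }. -/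
open ComplexConjugate
open scoped RealInnerProductSpace Pointwise

/-- The point `(‖Δy‖/‖Δu‖)·e^{iθ}` with `θ = arccos(⟨Δu,Δy⟩/(‖Δu‖‖Δy‖)) ∈ [0,π]`
contributed to the SRG by a pair of increments `Δu`, `Δy` (equal to `0` when `Δy = 0`). -/
noncomputable def srgPoint {H : Type*} [NormedAddCommGroup H] [InnerProductSpace ℝ H]
    (du dy : H) : ℂ :=
  ((‖dy‖ / ‖du‖ : ℝ) : ℂ) *
    Complex.exp (Complex.I * ((Real.arccos (⟪du, dy⟫ / (‖du‖ * ‖dy‖)) : ℝ) : ℂ))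

/-- The Scaled Relative Graph of an operator `R` on a real Hilbert space over a set `U` of
inputs; both signs of the angle are included (via complex conjugation). -/
noncomputable def SRG {H : Type*} [NormedAddCommGroup H] [InnerProductSpace ℝ H]
    (R : H → H) (U : Set H) : Set ℂ :=
  { z | ∃ u₁ ∈ U, ∃ u₂ ∈ U, u₁ ≠ u₂ ∧
      (z = srgPoint (u₁ - u₂) (R u₁ - R u₂) ∨
        z = conj (srgPoint (u₁ - u₂) (R u₁ - R u₂))) }

/-- The Scaled Graph of an operator `R` at the particular input `us`, over a set `U` of inputs. -/
noncomputable def SG {H : Type*} [NormedAddCommGroup H] [InnerProductSpace ℝ H]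
    (R : H → H) (U : Set H) (us : H) : Set ℂ :=
  { z | ∃ u ∈ U, u ≠ us ∧
      (z = srgPoint (u - us) (R u - R us) ∨
        z = conj (srgPoint (u - us) (R u - R us))) }


open MeasureTheory

/-- `L₂^d = L²([0,∞), ℝ^d)`. -/
noncomputable abbrev L2S (d : ℕ) :=
  MeasureTheory.Lp (EuclideanSpace ℝ (Fin d)) 2 (MeasureTheory.volume.restrict (Set.Ici (0 : ℝ)))

lemma term_nonneg (μ Λ mi li a b : ℝ) (hμ : μ ≤ mi) (hΛ : li ≤ Λ)
    (h1 : mi * a ^ 2 ≤ a * b) (h2 : a * b ≤ li * a ^ 2) (h0 : a = 0 → b = 0) :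
    0 ≤ (b - μ * a) * (Λ * a - b) := by
  rcases eq_or_ne a 0 with ha | ha
  · have hb := h0 ha
    simp [ha, hb]
  · have hp : μ * a ^ 2 ≤ a * b := le_trans (by nlinarith [sq_nonneg a]) h1
    have hq : a * b ≤ Λ * a ^ 2 := le_trans h2 (by nlinarith [sq_nonneg a])
    have h3 : 0 ≤ ((b - μ * a) * (Λ * a - b)) * a ^ 2 := by nlinarith
    have ha2 : 0 < a ^ 2 := by positivity
    exact (mul_nonneg_iff_of_pos_right ha2).mp h3

lemma srg_disk {H : Type*} [NormedAddCommGroup H] [InnerProductSpace ℝ H]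
    (f g : H) (hf : f ≠ 0) (c R : ℝ) (hR : 0 ≤ R)
    (hkey : ‖g‖ ^ 2 - 2 * c * ⟪f, g⟫ + (c ^ 2 - R ^ 2) * ‖f‖ ^ 2 ≤ 0) :
    ‖srgPoint f g - (c : ℂ)‖ ≤ R := by
  have hfn : ‖f‖ ≠ 0 := norm_ne_zero_iff.mpr hf
  have hf2 : (0:ℝ) < ‖f‖ ^ 2 := by positivity
  set r : ℝ := ‖g‖ / ‖f‖ with hr
  set s : ℝ := ⟪f, g⟫ / (‖f‖ * ‖g‖) with hs
  set θ : ℝ := Real.arccos s with hθ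
  have hs1 : |s| ≤ 1 := abs_real_inner_div_norm_mul_norm_le_one f g
  have hcos : Real.cos θ = s := Real.cos_arccos (neg_le_of_abs_le hs1) (le_of_abs_le hs1)
  have hsin : Real.sin θ ^ 2 = 1 - s ^ 2 := by
    rw [Real.sin_arccos, Real.sq_sqrt (by nlinarith [abs_nonneg s, sq_abs s])]
  have hrs : r * s = ⟪f, g⟫ / ‖f‖ ^ 2 := by
    rcases eq_or_ne g 0 with hg | hg
    · simp [hr, hs, hg]
    · have hgn : ‖g‖ ≠ 0 := norm_ne_zero_iff.mpr hg
      rw [hr, hs]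
      field_simp
  have hz0 : srgPoint f g = ((r : ℝ) : ℂ) * Complex.exp (Complex.I * ((θ : ℝ) : ℂ)) := rfl
  have hz : srgPoint f g - (c : ℂ) =
      Complex.mk (r * Real.cos θ - c) (r * Real.sin θ) := by
    rw [hz0, mul_comm Complex.I, Complex.exp_mul_I, Complex.mk_eq_add_mul_I,
      ← Complex.ofReal_cos, ← Complex.ofReal_sin]
    push_cast
    ring
  have habs2 : ‖srgPoint f g - (c : ℂ)‖ ^ 2 = r ^ 2 - 2 * c * (r * s) + c ^ 2 := by
    rw [hz, Complex.sq_norm, Complex.normSq_mk, hcos]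
    nlinarith [hsin]
  have hr2 : r ^ 2 = ‖g‖ ^ 2 / ‖f‖ ^ 2 := by rw [hr, div_pow]
  have hfrac : r ^ 2 - 2 * c * (r * s) + c ^ 2 - R ^ 2 =
      (‖g‖ ^ 2 - 2 * c * ⟪f, g⟫ + (c ^ 2 - R ^ 2) * ‖f‖ ^ 2) / ‖f‖ ^ 2 := by
    rw [hr2, hrs]; field_simp; ring
  have hle : ‖srgPoint f g - (c : ℂ)‖ ^ 2 ≤ R ^ 2 := by
    have := div_nonpos_of_nonpos_of_nonneg hkey (le_of_lt hf2)
    rw [← hfrac] at this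
    linarith [habs2]
  exact (pow_le_pow_iff_left₀ (norm_nonneg _) hR two_ne_zero).mp hle

/-- SRG of a diagonal static incrementally sector-bounded nonlinearity: let
`φ_i : ℝ → ℝ`, `φ_i(0) = 0`, satisfy the incremental sector bound `∂φ_i ∈ [μ_i, λ_i]`, and let
`Φ : L₂^d → L₂^d` act diagonally and statically, `(Φu)(t) = (φ₁(u₁(t)),…,φ_d(u_d(t)))` (a.e.).
With `μ = min_i μ_i` and `λ = max_i λ_i`, the SRG of `Φ` (over all of `L₂^d`) is contained in
the disk `D_{[μ,λ]}` centered at `(λ+μ)/2` with radius `(λ−μ)/2`. -/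
theorem stmt18 (d : ℕ) (hd : 1 ≤ d) (φ : Fin d → ℝ → ℝ) (m l : Fin d → ℝ)
    (hml : ∀ i, m i ≤ l i) (hφ0 : ∀ i, φ i 0 = 0)
    (hsec : ∀ i, ∀ x y : ℝ,
      m i * (x - y) ^ 2 ≤ (x - y) * (φ i x - φ i y) ∧
      (x - y) * (φ i x - φ i y) ≤ l i * (x - y) ^ 2)
    (Φ : L2S d → L2S d)
    (hΦ : ∀ u : L2S d, ∀ᵐ t ∂(MeasureTheory.volume.restrict (Set.Ici (0 : ℝ))),
      (Φ u : ℝ → EuclideanSpace ℝ (Fin d)) t =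
        fun i => φ i ((u : ℝ → EuclideanSpace ℝ (Fin d)) t i)) :
    SRG Φ (Set.univ : Set (L2S d)) ⊆
      { z : ℂ | ‖z - (((sSup (Set.range l) + sInf (Set.range m)) / 2 : ℝ) : ℂ)‖ ≤
          (sSup (Set.range l) - sInf (Set.range m)) / 2 } := by
  set Λ : ℝ := sSup (Set.range l) with hΛdef
  set μ : ℝ := sInf (Set.range m) with hμdef
  have i0 : Fin d := ⟨0, hd⟩
  have hΛ : ∀ i, l i ≤ Λ := fun i => le_csSup (Set.finite_range l).bddAbove ⟨i, rfl⟩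
  have hμ : ∀ i, μ ≤ m i := fun i => csInf_le (Set.finite_range m).bddBelow ⟨i, rfl⟩
  have hμΛ : μ ≤ Λ := le_trans (hμ i0) (le_trans (hml i0) (hΛ i0))
  rintro z ⟨u₁, -, u₂, -, hne12, hcase⟩
  set ν := MeasureTheory.volume.restrict (Set.Ici (0 : ℝ)) with hν
  set f : L2S d := u₁ - u₂ with hfdef
  set g : L2S d := Φ u₁ - Φ u₂ with hgdef
  have hf : f ≠ 0 := sub_ne_zero.mpr hne12
  -- the key quadratic inequality
  have hfg_i : Integrable (fun t => (⟪f t, g t⟫ : ℝ)) ν := L2.integrable_inner f g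
  have hgg_i : Integrable (fun t => (⟪g t, g t⟫ : ℝ)) ν := L2.integrable_inner g g
  have hff_i : Integrable (fun t => (⟪f t, f t⟫ : ℝ)) ν := L2.integrable_inner f f
  have hae : ∀ᵐ t ∂ν, 0 ≤ (Λ + μ) * ⟪f t, g t⟫ - ⟪g t, g t⟫ - Λ * μ * ⟪f t, f t⟫ := by
    filter_upwards [hΦ u₁, hΦ u₂, Lp.coeFn_sub u₁ u₂, Lp.coeFn_sub (Φ u₁) (Φ u₂)]
      with t h1 h2 h3 h4
    have hft : ∀ i, f t i = u₁ t i - u₂ t i := by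
      intro i; rw [hfdef]; rw [h3]; rfl
    have hgt : ∀ i, g t i = φ i (u₁ t i) - φ i (u₂ t i) := by
      intro i; rw [hgdef]
      have : (Φ u₁ - Φ u₂ : L2S d) t = Φ u₁ t - Φ u₂ t := h4
      rw [this]
      have : (Φ u₁ t - Φ u₂ t : EuclideanSpace ℝ (Fin d)) i = Φ u₁ t i - Φ u₂ t i := rfl
      rw [this, h1, h2]
    have hinner : ∀ (v w : EuclideanSpace ℝ (Fin d)), (⟪v, w⟫ : ℝ) = ∑ i, v i * w i := by
      intro v w; simp [PiLp.inner_apply, RCLike.inner_apply, conj_trivial]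
      exact Finset.sum_congr rfl fun i _ => mul_comm _ _
    rw [hinner, hinner, hinner]
    have key : (Λ + μ) * ∑ i, f t i * g t i - (∑ i, g t i * g t i)
        - Λ * μ * ∑ i, f t i * f t i
        = ∑ i, (g t i - μ * f t i) * (Λ * f t i - g t i) := by
      rw [Finset.mul_sum, Finset.mul_sum, ← Finset.sum_sub_distrib, ← Finset.sum_sub_distrib]
      exact Finset.sum_congr rfl fun i _ => by ring
    rw [key]
    refine Finset.sum_nonneg fun i _ => ?_
    have hs1 := (hsec i (u₁ t i) (u₂ t i)).1
    have hs2 := (hsec i (u₁ t i) (u₂ t i)).2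
    rw [hft, hgt]
    refine term_nonneg μ Λ (m i) (l i) _ _ (hμ i) (hΛ i) hs1 hs2 ?_
    intro h0
    have : u₁ t i = u₂ t i := by linarith [sub_eq_zero.mp h0]
    rw [this, sub_self]
  have hint : 0 ≤ ∫ t, ((Λ + μ) * ⟪f t, g t⟫ - ⟪g t, g t⟫ - Λ * μ * ⟪f t, f t⟫) ∂ν :=
    integral_nonneg_of_ae hae
  have hint_eq : ∫ t, ((Λ + μ) * ⟪f t, g t⟫ - ⟪g t, g t⟫ - Λ * μ * ⟪f t, f t⟫) ∂ν
      = (Λ + μ) * ⟪f, g⟫ - ‖g‖ ^ 2 - Λ * μ * ‖f‖ ^ 2 := by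
    have h1 : Integrable (fun t => (Λ + μ) * ⟪f t, g t⟫ - ⟪g t, g t⟫) ν :=
      (hfg_i.const_mul _).sub hgg_i
    have h2 : Integrable (fun t => Λ * μ * ⟪f t, f t⟫) ν := hff_i.const_mul _
    have h3 : Integrable (fun t => (Λ + μ) * ⟪f t, g t⟫) ν := hfg_i.const_mul _
    rw [integral_sub h1 h2, integral_sub h3 hgg_i,
      integral_const_mul, integral_const_mul, ← L2.inner_def, ← L2.inner_def, ← L2.inner_def,
      real_inner_self_eq_norm_sq, real_inner_self_eq_norm_sq]
  rw [hint_eq] at hint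
  have hkey : ‖g‖ ^ 2 - 2 * ((Λ + μ) / 2) * ⟪f, g⟫
      + (((Λ + μ) / 2) ^ 2 - ((Λ - μ) / 2) ^ 2) * ‖f‖ ^ 2 ≤ 0 := by nlinarith [hint]
  have hR : (0:ℝ) ≤ (Λ - μ) / 2 := by linarith
  have hdisk := srg_disk f g hf ((Λ + μ) / 2) ((Λ - μ) / 2) hR hkey
  simp only [Set.mem_setOf_eq]
  rcases hcase with h | h
  · rw [h]
    exact hdisk
  · rw [h]
    have heq : (starRingEnd ℂ) (srgPoint f g) - (((Λ + μ) / 2 : ℝ) : ℂ)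
        = (starRingEnd ℂ) (srgPoint f g - (((Λ + μ) / 2 : ℝ) : ℂ)) := by
      rw [map_sub, Complex.conj_ofReal]
    rw [heq, Complex.norm_conj]
    exact hdisk
end

section
/- Let d ≥ 1 and for i = 1,…,d let φ_i : ℝ → ℝ be a Borel measurable function satisfying the (non-incremental) sector bound μ_i·x² ≤ x·φ_i(x) ≤ λ_i·x² for all x ∈ ℝ, where μ_i ≤ λ_i are real constants (in particular φ_i(0) = 0 and |φ_i(x)| ≤ max(|μ_i|,|λ_i|)·|x|, so the diagonal static operator Φ : L₂^d → L₂^d, (Φu)(t) := (φ₁(u₁(t)),…,φ_d(u_d(t))), is well defined). Set μ := min_i μ_i and λ := max_i λ_i. Then SG₀(Φ) ⊆ { z ∈ ℂ : |z − (λ+μ)/2| ≤ (λ−μ)/2 }. -/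
open ComplexConjugate
open scoped RealInnerProductSpace Pointwise

open MeasureTheory

lemma absHelper (ρ θ c : ℝ) :
    ‖(ρ:ℂ) * Complex.exp (Complex.I * θ) - c‖^2
      = ρ^2 - 2*c*(ρ*Real.cos θ) + c^2 := by
  rw [← Complex.normSq_eq_norm_sq]
  have h := Real.sin_sq_add_cos_sq θ
  simp [mul_comm Complex.I, Complex.exp_mul_I, Complex.normSq_apply, Complex.mul_re,
    Complex.mul_im, Complex.cos_ofReal_re, Complex.sin_ofReal_re]
  ring_nf
  nlinarith [h]

lemma termHelper (mu lam y x : ℝ) (h1 : mu * x^2 ≤ x*y) (h2 : x*y ≤ lam*x^2)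
    (h0 : x = 0 → y = 0) : (y - lam*x)*(y - mu*x) ≤ 0 := by
  rcases eq_or_ne x 0 with h|h
  · simp [h, h0 h]
  rcases h.lt_or_gt with hx|hx
  · have ha : lam*x ≤ y := by nlinarith
    have hb : y ≤ mu*x := by nlinarith
    nlinarith
  · have ha : mu*x ≤ y := by nlinarith
    have hb : y ≤ lam*x := by nlinarith
    nlinarith

/-- scaled graph at zero of a diagonal static sector-bounded nonlinearity: let
`φ_i : ℝ → ℝ` be Borel measurable and satisfy the non-incremental sector bound
`φ_i ∈ [μ_i, λ_i]`, i.e. `μ_i x² ≤ x·φ_i(x) ≤ λ_i x²` for all `x` (so `φ_i(0) = 0` and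
`|φ_i(x)| ≤ max(|μ_i|,|λ_i|)·|x|`), and let `Φ : L₂^d → L₂^d` act diagonally and statically,
`(Φu)(t) = (φ₁(u₁(t)),…,φ_d(u_d(t)))` (a.e.). With `μ = min_i μ_i` and `λ = max_i λ_i`, the
scaled graph of `Φ` at zero (over all of `L₂^d`) is contained in the disk centered at
`(λ+μ)/2` with radius `(λ−μ)/2`. -/
theorem stmt19 (d : ℕ) (hd : 1 ≤ d) (φ : Fin d → ℝ → ℝ) (m l : Fin d → ℝ)
    (hml : ∀ i, m i ≤ l i) (hmeas : ∀ i, Measurable (φ i))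
    (hsec : ∀ i, ∀ x : ℝ,
      m i * x ^ 2 ≤ x * φ i x ∧ x * φ i x ≤ l i * x ^ 2)
    (Φ : L2S d → L2S d)
    (hΦ : ∀ u : L2S d, ∀ᵐ t ∂(MeasureTheory.volume.restrict (Set.Ici (0 : ℝ))),
      (Φ u : ℝ → EuclideanSpace ℝ (Fin d)) t =
        fun i => φ i ((u : ℝ → EuclideanSpace ℝ (Fin d)) t i)) :
    SG Φ (Set.univ : Set (L2S d)) 0 ⊆
      { z : ℂ | ‖z - (((sSup (Set.range l) + sInf (Set.range m)) / 2 : ℝ) : ℂ)‖ ≤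
          (sSup (Set.range l) - sInf (Set.range m)) / 2 } := by
  set ν := MeasureTheory.volume.restrict (Set.Ici (0:ℝ)) with hνdef
  set lam := sSup (Set.range l) with hlamdef
  set mu := sInf (Set.range m) with hmudef
  have hlb : ∀ i, l i ≤ lam := fun i => le_csSup (Set.finite_range l).bddAbove ⟨i, rfl⟩
  have hmb : ∀ i, mu ≤ m i := fun i => csInf_le (Set.finite_range m).bddBelow ⟨i, rfl⟩
  have i0 : Fin d := ⟨0, hd⟩
  have hmul : mu ≤ lam := ((hmb i0).trans (hml i0)).trans (hlb i0)
  have hνuniv : ν Set.univ = ⊤ := by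
    rw [hνdef, Measure.restrict_apply_univ, Real.volume_Ici]
  have hνne : ν ≠ 0 := by
    intro h; rw [h] at hνuniv; simp at hνuniv
  -- φ i 0 = 0
  have hc0 : ∀ i, φ i 0 = 0 := by
    have h1 : (Φ 0 : ℝ → EuclideanSpace ℝ (Fin d)) =ᵐ[ν]
        fun _ => (WithLp.toLp 2 (fun i => φ i 0) : EuclideanSpace ℝ (Fin d)) := by
      filter_upwards [hΦ 0, Lp.coeFn_zero (EuclideanSpace ℝ (Fin d)) 2 ν] with t ht h0
      ext i; rw [congrFun ht i, h0]; simp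
    have h2 := Lp.eLpNorm_lt_top (Φ 0)
    rw [eLpNorm_congr_ae h1, eLpNorm_const _ two_ne_zero hνne, hνuniv,
      ENNReal.top_rpow_of_pos (by norm_num)] at h2
    intro i
    by_contra hc
    have hcne : (WithLp.toLp 2 (fun i => φ i 0) : EuclideanSpace ℝ (Fin d)) ≠ 0 := by
      intro h
      exact hc (by simpa using congrArg (fun v : EuclideanSpace ℝ (Fin d) => v i) h)
    rw [ENNReal.mul_top (by simpa using hcne)] at h2
    exact lt_irrefl _ h2
  intro z hz
  obtain ⟨u, -, hu0, hzeq⟩ := hz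
  set y := Φ u - Φ 0 with hydef
  have hycoe : (y : ℝ → EuclideanSpace ℝ (Fin d)) =ᵐ[ν]
      fun t => (WithLp.toLp 2 (fun i => φ i ((u : ℝ → EuclideanSpace ℝ (Fin d)) t i)) :
        EuclideanSpace ℝ (Fin d)) := by
    filter_upwards [Lp.coeFn_sub (Φ u) (Φ 0), hΦ u, hΦ 0,
      Lp.coeFn_zero (EuclideanSpace ℝ (Fin d)) 2 ν] with t h1 h2 h3 h4
    rw [hydef, h1]
    simp only [Pi.sub_apply]
    ext i
    have h3' := congrFun h3 i
    rw [h4] at h3'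
    simp [congrFun h2 i, h3', hc0]
  -- key quadratic inequality
  have key : ⟪y - lam • u, y - mu • u⟫ ≤ 0 := by
    rw [MeasureTheory.L2.inner_def]
    apply integral_nonpos_of_ae
    filter_upwards [Lp.coeFn_sub y (lam • u), Lp.coeFn_sub y (mu • u),
      Lp.coeFn_smul lam u, Lp.coeFn_smul mu u, hycoe] with t e1 e2 e3 e4 e5
    rw [e1, e2]
    simp only [Pi.sub_apply]
    rw [e3, e4, e5]
    simp only [Pi.smul_apply, PiLp.inner_apply, RCLike.inner_apply, conj_trivial]
    apply Finset.sum_nonpos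
    intro i _
    have hxs : (lam • (u : ℝ → EuclideanSpace ℝ (Fin d)) t) i
        = lam * (u : ℝ → EuclideanSpace ℝ (Fin d)) t i := rfl
    have hxs2 : (mu • (u : ℝ → EuclideanSpace ℝ (Fin d)) t) i
        = mu * (u : ℝ → EuclideanSpace ℝ (Fin d)) t i := rfl
    simp only [PiLp.sub_apply, hxs, hxs2]
    set x := (u : ℝ → EuclideanSpace ℝ (Fin d)) t i
    have h1 : mu * x^2 ≤ x * φ i x :=
      le_trans (mul_le_mul_of_nonneg_right (hmb i) (sq_nonneg x)) (hsec i x).1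
    have h2 : x * φ i x ≤ lam * x^2 :=
      le_trans (hsec i x).2 (mul_le_mul_of_nonneg_right (hlb i) (sq_nonneg x))
    rw [mul_comm]
    exact termHelper mu lam (φ i x) x h1 h2 (fun hx => by rw [hx, hc0])
  have key2 : ‖y‖^2 - (lam+mu) * ⟪u,y⟫ + lam*mu*‖u‖^2 ≤ 0 := by
    have hexp : ⟪y - lam • u, y - mu • u⟫
        = ‖y‖^2 - (lam+mu) * ⟪u,y⟫ + lam*mu*‖u‖^2 := by
      simp only [inner_sub_left, inner_sub_right, real_inner_smul_left, real_inner_smul_right,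
        real_inner_self_eq_norm_sq, real_inner_comm y u]
      ring
    linarith [hexp ▸ key]
  -- notation
  set a := ‖u‖ with hadef
  set b := ‖y‖ with hbdef
  set p := ⟪u, y⟫ with hpdef
  have ha : 0 < a := by
    rw [hadef, norm_pos_iff]
    exact hu0
  have ha2 : (0:ℝ) < a^2 := by positivity
  set c : ℝ := (lam + mu)/2 with hcdef
  have hcos : (b/a) * Real.cos (Real.arccos (p/(a*b))) = p/a^2 := by
    rcases eq_or_ne b 0 with hb0|hb0
    · have hy0 : y = 0 := by rwa [hbdef, norm_eq_zero] at hb0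
      have : p = 0 := by rw [hpdef, hy0, inner_zero_right]
      simp [hb0, this]
    · have hcs := abs_real_inner_le_norm u y
      have hab : (0:ℝ) < a * b := mul_pos ha (lt_of_le_of_ne (norm_nonneg y) (Ne.symm hb0))
      have habs1 : |p/(a*b)| ≤ 1 := by
        rw [abs_div, abs_of_pos hab, div_le_one hab]
        exact hcs
      obtain ⟨hl1, hl2⟩ := abs_le.mp habs1
      rw [Real.cos_arccos hl1 hl2]
      have ha' : a ≠ 0 := ne_of_gt ha
      field_simp
  have hsrg : ‖srgPoint u y - (c:ℂ)‖^2 = (b^2 - 2*c*p + c^2*a^2)/a^2 := by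
    have := absHelper (b/a) (Real.arccos (p/(a*b))) c
    rw [hcos] at this
    rw [srgPoint]
    rw [this]
    field_simp
  have hr : (0:ℝ) ≤ (lam - mu)/2 := by linarith
  have hsq : ‖srgPoint u y - (c:ℂ)‖^2 ≤ ((lam - mu)/2)^2 := by
    rw [hsrg, div_le_iff₀ ha2, hcdef]
    nlinarith [key2]
  have hfinal : ‖srgPoint u y - (c:ℂ)‖ ≤ (lam - mu)/2 := by
    nlinarith [hsq, norm_nonneg (srgPoint u y - (c:ℂ)), hr]
  simp only [Set.mem_setOf_eq]
  have hsz : u - 0 = u := sub_zero u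
  rcases hzeq with h|h
  · rw [h, hsz]
    exact hfinal
  · rw [h, hsz]
    calc ‖conj (srgPoint u y) - (c:ℂ)‖
        = ‖conj (srgPoint u y - (c:ℂ))‖ := by
          rw [map_sub (starRingEnd ℂ), Complex.conj_ofReal]
      _ ≤ (lam - mu)/2 := by rw [Complex.norm_conj]; exact hfinal
end
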